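/- If a dynamics f_u on a matrix Lie group G satisfies the group affine property f_u(X₁X₂) = f_u(X₁)X₂ + X₁f_u(X₂) − X₁f_u(I)X₂, and X_t, X̂_t are two trajectories satisfying dX/dt = f_{u_t}(X), then the right-invariant error η_t = X̂_t X_t⁻¹ satisfies the autonomous differential equation dη/dt = f_{u_t}(η) − η f_{u_t}(I), which does not depend on either trajectory. -/

import Mathlib

open Matrix

section LinftyAux

attribute [local instance] Matrix.linftyOpNormedRing Matrix.linftyOpNormedAlgebra

/-- Identity continuous linear equivalence from matrices with the `linfty` operator norm
to the pi (entrywise sup) norm. -/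
noncomputable def matrixToPiCLE (m n : ℕ) :
    (Matrix (Fin m) (Fin n) ℝ) ≃L[ℝ] (Fin m → Fin n → ℝ) :=
  ContinuousLinearEquiv.piCongrRight fun _ : Fin m =>
    ContinuousLinearEquiv.refl ℝ (Fin n → ℝ)

/-- Transfer a derivative from the linfty norm to the pi norm. -/
theorem hasDerivAt_toPi {n : ℕ} {g : ℝ → Matrix (Fin n) (Fin n) ℝ}
    {g' : Matrix (Fin n) (Fin n) ℝ} {t : ℝ} (h : HasDerivAt g g' t) :
    @HasDerivAt ℝ _ _ Matrix.normedAddCommGroup.toAddCommGroup Matrix.normedSpace.toModule _ _ g g' t :=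
  ((matrixToPiCLE n n).hasFDerivAt.comp_hasDerivAt t h : )

/-- Transfer a derivative from the pi norm to the linfty norm. -/
theorem hasDerivAt_ofPi {n : ℕ} {g : ℝ → Matrix (Fin n) (Fin n) ℝ}
    {g' : Matrix (Fin n) (Fin n) ℝ} {t : ℝ}
    (h : @HasDerivAt ℝ _ _ Matrix.normedAddCommGroup.toAddCommGroup Matrix.normedSpace.toModule _ _ g g' t) :
    HasDerivAt g g' t :=
  (((matrixToPiCLE n n).symm.hasFDerivAt.comp_hasDerivAt t h : ) : )

/-- The main computation, in the linfty-norm world where matrices form a normed ring. -/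
theorem right_invariant_error_autonomous_linfty {n : ℕ}
    (G : Set (Matrix (Fin n) (Fin n) ℝ))
    (f : ℝ → Matrix (Fin n) (Fin n) ℝ → Matrix (Fin n) (Fin n) ℝ)
    (haff : ∀ t : ℝ, ∀ X₁ ∈ G, ∀ X₂ ∈ G,
      f t (X₁ * X₂) = f t X₁ * X₂ + X₁ * f t X₂ - X₁ * f t 1 * X₂)
    (X Xh : ℝ → Matrix (Fin n) (Fin n) ℝ)
    (hXG : ∀ t, X t ∈ G)
    (hXu : ∀ t, IsUnit (X t))
    (hX : ∀ t, HasDerivAt X (f t (X t)) t)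
    (hXh : ∀ t, HasDerivAt Xh (f t (Xh t)) t)
    (η : ℝ → Matrix (Fin n) (Fin n) ℝ)
    (hη : ∀ t, η t = Xh t * Ring.inverse (X t))
    (hηG : ∀ t, η t ∈ G) :
    ∀ t, HasDerivAt η (f t (η t) - η t * f t 1) t := by
  intro t
  set R := Ring.inverse (X t) with hR
  have hR1 : X t * R = 1 := Ring.mul_inverse_cancel _ (hXu t)
  have hR1' : ∀ A, X t * (R * A) = A := fun A => by rw [← mul_assoc, hR1, one_mul]
  have hY : HasDerivAt (fun s => Ring.inverse (X s)) (-(R * f t (X t) * R)) t := by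
    have h1 := (hasFDerivAt_ringInverse (hXu t).unit).comp_hasDerivAt t (hX t)
    have h2 : (↑(hXu t).unit⁻¹ : Matrix (Fin n) (Fin n) ℝ) = R := by
      rw [hR, ← Ring.inverse_unit (hXu t).unit, IsUnit.unit_spec]
    simp only [h2] at h1
    exact h1
  have hprod := (hXh t).mul hY
  have hderiv_eq : f t (Xh t) * Ring.inverse (X t) + Xh t * -(R * f t (X t) * R)
      = f t (η t) - η t * f t 1 := by
    have hE : Xh t = η t * X t := by
      rw [hη t, mul_assoc, Ring.inverse_mul_cancel _ (hXu t), mul_one]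
    have haffm := haff t (η t) (hηG t) (X t) (hXG t)
    rw [hE, haffm]
    simp only [← hR, add_mul, sub_mul, mul_neg, neg_mul, mul_assoc, hR1', hR1, mul_one]
    abel
  exact (hderiv_eq ▸ hprod).congr_of_eventuallyEq (Filter.Eventually.of_forall hη)

end LinftyAux

attribute [local instance] Matrix.normedAddCommGroup Matrix.normedSpace

/-- Autonomous right-invariant error dynamics for group-affine dynamics:
if f_u is group affine on G and X, X̂ are trajectories of dX/dt = f_{u_t}(X),
then η_t = X̂_t X_t⁻¹ satisfies dη/dt = f_{u_t}(η) − η f_{u_t}(I),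
independently of either trajectory. -/
theorem right_invariant_error_autonomous {n : ℕ}
    (G : Set (Matrix (Fin n) (Fin n) ℝ)) (hG1 : (1 : Matrix (Fin n) (Fin n) ℝ) ∈ G)
    (f : ℝ → Matrix (Fin n) (Fin n) ℝ → Matrix (Fin n) (Fin n) ℝ)
    (haff : ∀ t : ℝ, ∀ X₁ ∈ G, ∀ X₂ ∈ G,
      f t (X₁ * X₂) = f t X₁ * X₂ + X₁ * f t X₂ - X₁ * f t 1 * X₂)
    (X Xh : ℝ → Matrix (Fin n) (Fin n) ℝ)
    (hXG : ∀ t, X t ∈ G) (hXhG : ∀ t, Xh t ∈ G)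
    (hXu : ∀ t, IsUnit (X t))
    (hX : ∀ t, HasDerivAt X (f t (X t)) t)
    (hXh : ∀ t, HasDerivAt Xh (f t (Xh t)) t)
    (η : ℝ → Matrix (Fin n) (Fin n) ℝ)
    (hη : ∀ t, η t = Xh t * Ring.inverse (X t))
    (hηG : ∀ t, η t ∈ G) :
    ∀ t, HasDerivAt η (f t (η t) - η t * f t 1) t := by
  intro t
  exact hasDerivAt_toPi
    (right_invariant_error_autonomous_linfty G f haff X Xh hXG hXu
      (fun s => hasDerivAt_ofPi (hX s)) (fun s => hasDerivAt_ofPi (hXh s)) η hη hηG t)
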